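/- For matrices A ∈ H^{m×n} and B ∈ H^{m×k} over the quaternions (or over ℂ), rank(A) + rank((I - A A†) B) = rank of the block matrix [A B], where A† is the Moore-Penrose inverse of A. -/

import Mathlib

open Matrix

lemma range_fromColumns {m n k : ℕ} (A : Matrix (Fin m) (Fin n) ℂ)
    (B : Matrix (Fin m) (Fin k) ℂ) :
    LinearMap.range (Matrix.fromCols A B).mulVecLin
      = LinearMap.range A.mulVecLin ⊔ LinearMap.range B.mulVecLin := by
  apply le_antisymm
  · rintro x ⟨v, rfl⟩
    have : fromCols A B *ᵥ v = A *ᵥ (v ∘ Sum.inl) + B *ᵥ (v ∘ Sum.inr) := by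
      rw [← fromCols_mulVec_sumElim, Sum.elim_comp_inl_inr]
    rw [mulVecLin_apply, this]
    exact Submodule.add_mem_sup ⟨v ∘ Sum.inl, rfl⟩ ⟨v ∘ Sum.inr, rfl⟩
  · rw [sup_le_iff]
    constructor
    · rintro x ⟨v, rfl⟩
      exact ⟨Sum.elim v 0, by simp [fromCols_mulVec_sumElim]⟩
    · rintro x ⟨v, rfl⟩
      exact ⟨Sum.elim 0 v, by simp [fromCols_mulVec_sumElim]⟩

/-- Marsaglia–Styan: rank(A) + rank((I - A A†) B) = rank [A B]. -/
theorem stmt0 {m n k : ℕ}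
    (A : Matrix (Fin m) (Fin n) ℂ) (B : Matrix (Fin m) (Fin k) ℂ)
    (Adag : Matrix (Fin n) (Fin m) ℂ)
    (h1 : A * Adag * A = A) (h2 : Adag * A * Adag = Adag)
    (h3 : (A * Adag)ᴴ = A * Adag) (h4 : (Adag * A)ᴴ = Adag * A) :
    A.rank + ((1 - A * Adag) * B).rank = (Matrix.fromCols A B).rank := by
  set C : Matrix (Fin m) (Fin k) ℂ := (1 - A * Adag) * B with hC
  -- column space of [A B] equals column space of [A C]
  have hsup : LinearMap.range A.mulVecLin ⊔ LinearMap.range B.mulVecLin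
      = LinearMap.range A.mulVecLin ⊔ LinearMap.range C.mulVecLin := by
    apply le_antisymm <;> rw [sup_le_iff] <;> refine ⟨le_sup_left, ?_⟩
    · rintro x ⟨v, rfl⟩
      have : B *ᵥ v = A *ᵥ ((Adag * B) *ᵥ v) + C *ᵥ v := by
        simp [hC, Matrix.mulVec_mulVec, Matrix.sub_mul, Matrix.sub_mulVec,
          Matrix.mul_assoc]
      rw [mulVecLin_apply, this]
      exact Submodule.add_mem_sup ⟨(Adag * B) *ᵥ v, rfl⟩ ⟨v, rfl⟩
    · rintro x ⟨v, rfl⟩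
      have : C *ᵥ v = B *ᵥ v - A *ᵥ ((Adag * B) *ᵥ v) := by
        simp [hC, Matrix.mulVec_mulVec, Matrix.sub_mul, Matrix.sub_mulVec,
          Matrix.mul_assoc]
      rw [mulVecLin_apply, this, sub_eq_add_neg, add_comm]
      exact Submodule.add_mem_sup (Submodule.neg_mem _ ⟨(Adag * B) *ᵥ v, rfl⟩) ⟨v, rfl⟩
  -- ranges of A and C intersect trivially
  have hinf : LinearMap.range A.mulVecLin ⊓ LinearMap.range C.mulVecLin = ⊥ := by
    rw [eq_bot_iff]
    rintro x ⟨⟨u, hu⟩, ⟨w, hw⟩⟩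
    simp only [mulVecLin_apply] at hu hw
    have hfix : (A * Adag) *ᵥ x = x := by
      rw [← hu, Matrix.mulVec_mulVec, Matrix.mul_assoc, ← Matrix.mul_assoc, h1]
    have hzero : (A * Adag) *ᵥ x = 0 := by
      have : (A * Adag) * C = 0 := by
        simp [hC, Matrix.mul_sub, Matrix.sub_mul, ← Matrix.mul_assoc, h1]
      rw [← hw, Matrix.mulVec_mulVec, this, Matrix.zero_mulVec]
    have : x = 0 := by rw [← hfix, hzero]
    simp [this]
  have key := Submodule.finrank_sup_add_finrank_inf_eq
    (LinearMap.range A.mulVecLin) (LinearMap.range C.mulVecLin)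
  rw [hinf] at key
  simp only [finrank_bot, add_zero] at key
  show A.rank + C.rank = _
  unfold Matrix.rank
  rw [range_fromColumns, hsup, key]
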